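/- arXiv:2404.17421 — 3 statements merged into one kernel-verified Lean document; each statement's English description precedes it below -/
import Mathlib

section
/- Let Q be a nonempty finite set, S and S' nonempty sets, and f : S' → S a surjection such that f⁻¹(s) is infinite for every s ∈ S. Let T_∃ = {A_1,...,A_n} and T_∀ be finite sets of subsets of Q. Let θ=(T_∃,T_∀) be the basic formula with distinctness: there exist pairwise distinct x_1,...,x_n with A_i ⊆ I(x_i) for each i, and every y distinct from all x_i satisfies B ⊆ I(y) for some B ∈ T_∀. Let θ(T_∃,T_∀) be the symmetric basic formula without the distinctness requirements (witnesses need not be distinct, and the universal condition applies to all y). Then for every one-step interpretation (S, I) over Q: (S, I) ⊨ θ(T_∃,T_∀) if and only if (S', I ∘ f) ⊨ θ=(T_∃,T_∀). -/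
/-- The symmetric basic formula `θ(T_∃,T_∀)` (no distinctness) over `(S, I)`.
`A : Fin n → Set Q` lists the existential types of `T_∃`. -/
def SymBasic {Q S : Type} (n : ℕ) (A : Fin n → Set Q) (Tforall : Finset (Set Q))
    (I : S → Set Q) : Prop :=
  (∃ x : Fin n → S, ∀ i, A i ⊆ I (x i)) ∧ ∀ y : S, ∃ B ∈ Tforall, B ⊆ I y

/-- The basic formula `θ=(T_∃,T_∀)` with distinctness over `(S', I')`:
pairwise distinct witnesses `x_1, ..., x_n` realizing the types `A_i`, and every
element distinct from all witnesses realizes some type of `T_∀`. -/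
def EqBasic {Q S : Type} (n : ℕ) (A : Fin n → Set Q) (Tforall : Finset (Set Q))
    (I : S → Set Q) : Prop :=
  ∃ x : Fin n → S, Function.Injective x ∧ (∀ i, A i ⊆ I (x i)) ∧
    ∀ y : S, (∀ i, y ≠ x i) → ∃ B ∈ Tforall, B ⊆ I y

/-- For a surjection `f : S' → S` with all fibers infinite,
`(S, I) ⊨ θ(T_∃,T_∀)` iff `(S', I ∘ f) ⊨ θ=(T_∃,T_∀)`. -/
theorem stmt4 {Q S S' : Type} [Nonempty Q] [Finite Q] [Nonempty S] [Nonempty S']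
    (f : S' → S) (hsurj : Function.Surjective f)
    (hfib : ∀ s : S, (f ⁻¹' {s}).Infinite)
    (n : ℕ) (A : Fin n → Set Q) (Tforall : Finset (Set Q)) (I : S → Set Q) :
    SymBasic n A Tforall I ↔ EqBasic n A Tforall (I ∘ f) := by
  constructor
  · rintro ⟨⟨x, hx⟩, hall⟩
    -- for each s, an embedding Fin n ↪ fiber of s
    have emb : ∀ s : S, Fin n ↪ ↥(f ⁻¹' {s}) := fun s =>
      haveI := (hfib s).to_subtype
      Fin.valEmbedding.trans (Infinite.natEmbedding _)
    refine ⟨fun i => (emb (x i) i : S'), ?_, ?_, ?_⟩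
    · intro i j hij
      simp only at hij
      have hfi : f ((emb (x i) i : S')) = x i := (emb (x i) i).2
      have hfj : f ((emb (x j) j : S')) = x j := (emb (x j) j).2
      have hxij : x i = x j := by rw [← hfi, ← hfj, hij]
      have : (emb (x i) i : S') = (emb (x i) j : S') := by rw [hij, hxij]
      exact (emb (x i)).injective (Subtype.ext this)
    · intro i
      have hfi : f ((emb (x i) i : S')) = x i := (emb (x i) i).2
      simpa [Function.comp, hfi] using hx i
    · intro y _
      exact hall (f y)
  · rintro ⟨x, hinj, hx, hall⟩
    refine ⟨⟨fun i => f (x i), fun i => hx i⟩, ?_⟩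
    intro s
    have : ((f ⁻¹' {s}) \ Set.range x).Nonempty := by
      have := (hfib s).diff (Set.finite_range x)
      exact this.nonempty
    obtain ⟨y, hy1, hy2⟩ := this
    have := hall y (fun i hyi => hy2 ⟨i, hyi.symm⟩)
    have hfy : f y = s := hy1
    simpa [Function.comp, hfy] using this
end

section
/- Let G = (V, E) be an acyclic leveled directed graph with V ⊆ ℕ × Q for Q finite, edges from level i to level i+1 only, all vertices reachable from the unique level-0 initial vertex, and Acc ⊆ V. Suppose every infinite path of G visits Acc infinitely often. Then there exists an infinite strictly increasing sequence of levels ℓ_0 = 0 < ℓ_1 < ℓ_2 < ... such that for every i ≥ 0, every finite path of G starting at a vertex of level ℓ_i + 1 and ending at a vertex of level ℓ_{i+1} visits some vertex in Acc. -/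
private lemma lev_aux {Q : Type} {E : Set ((ℕ × Q) × (ℕ × Q))}
    (hlev : ∀ e ∈ E, e.2.1 = e.1.1 + 1)
    (p : ℕ → ℕ × Q) (m : ℕ) (hp : ∀ k < m, (p k, p (k + 1)) ∈ E) :
    ∀ k ≤ m, (p k).1 = (p 0).1 + k := by
  intro k hk
  induction k with
  | zero => simp
  | succ n ih =>
    have h1 := hlev _ (hp n (by omega))
    have h2 := ih (by omega)
    simp only at h1
    omega

private lemma pigeon {α : Type} (P : α → ℕ → Prop)
    (hdown : ∀ v m n, n ≤ m → P v m → P v n)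
    {S : Set α} (hS : S.Finite) (hex : ∀ n, ∃ v ∈ S, P v n) :
    ∃ v ∈ S, ∀ n, P v n := by
  classical
  by_contra hcon
  push_neg at hcon
  choose N hN using hcon
  set M := hS.toFinset.sup (fun v => if hv : v ∈ S then N v hv else 0) with hM
  obtain ⟨v, hvS, hPv⟩ := hex M
  have hle : N v hvS ≤ M := by
    have hv' : v ∈ hS.toFinset := hS.mem_toFinset.mpr hvS
    have := Finset.le_sup (f := fun v => if hv : v ∈ S then N v hv else 0) hv'
    simpa [hvS] using this
  exact hN v hvS (hdown v M (N v hvS) hle hPv)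

/-- If every infinite path from the root of a rooted, finitely branching,
leveled graph over `ℕ × Q` (`Q` finite) visits `Acc` infinitely often, then
there is a strictly increasing sequence of levels `ℓ_0 = 0 < ℓ_1 < ...` such
that every finite path from a level-`(ℓ_i + 1)` vertex to a level-`ℓ_{i+1}`
vertex visits `Acc`. -/
theorem stmt11 {Q : Type} [Finite Q]
    (V : Set (ℕ × Q)) (E : Set ((ℕ × Q) × (ℕ × Q)))
    (hEV : ∀ e ∈ E, e.1 ∈ V ∧ e.2 ∈ V)
    (hlev : ∀ e ∈ E, e.2.1 = e.1.1 + 1)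
    (hfin : ∀ v : ℕ × Q, {w | (v, w) ∈ E}.Finite)
    (init : ℕ × Q) (hinit : init ∈ V) (hinit0 : init.1 = 0)
    (hreach : ∀ v ∈ V, Relation.ReflTransGen (fun a b => (a, b) ∈ E) init v)
    (Acc : Set (ℕ × Q)) (hAcc : Acc ⊆ V)
    (h : ∀ p : ℕ → ℕ × Q, p 0 = init → (∀ k, (p k, p (k + 1)) ∈ E) →
      {k | p k ∈ Acc}.Infinite) :
    ∃ l : ℕ → ℕ, l 0 = 0 ∧ StrictMono l ∧
      ∀ i m : ℕ, ∀ p : ℕ → ℕ × Q, p 0 ∈ V → (p 0).1 = l i + 1 →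
        (∀ k, k < m → (p k, p (k + 1)) ∈ E) → (p m).1 = l (i + 1) →
        ∃ k, k ≤ m ∧ p k ∈ Acc := by
  classical
  -- Key lemma: for each K there is a level L > K such that every path from a
  -- level-(K+1) vertex of V to a level-L vertex visits Acc.
  have key : ∀ K : ℕ, ∃ L, K < L ∧ ∀ m : ℕ, ∀ p : ℕ → ℕ × Q, p 0 ∈ V →
      (p 0).1 = K + 1 → (∀ k, k < m → (p k, p (k + 1)) ∈ E) → (p m).1 = L →
      ∃ k, k ≤ m ∧ p k ∈ Acc := by
    intro K
    by_contra hcon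
    push_neg at hcon
    -- hcon : ∀ L, K < L → ∃ m p, ... path to level L avoiding Acc
    -- "v has an Acc-avoiding path of length n"
    set Pg : (ℕ × Q) → ℕ → Prop := fun v n => v ∈ V ∧ ∃ p : ℕ → ℕ × Q,
      p 0 = v ∧ (∀ k, k < n → (p k, p (k + 1)) ∈ E) ∧ ∀ k, k ≤ n → p k ∉ Acc
      with hPg
    have hdown : ∀ v m n, n ≤ m → Pg v m → Pg v n := by
      rintro v m n hnm ⟨hv, p, h0, he, ha⟩
      exact ⟨hv, p, h0, fun k hk => he k (by omega), fun k hk => ha k (by omega)⟩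
    have notAcc : ∀ v, (∀ n, Pg v n) → v ∉ Acc := by
      intro v hv
      obtain ⟨_, p, h0, _, ha⟩ := hv 0
      exact h0 ▸ ha 0 le_rfl
    -- the level-(K+1) vertices form a finite set
    have hSfin : ({v | v ∈ V ∧ v.1 = K + 1} : Set (ℕ × Q)).Finite := by
      apply Set.Finite.subset (Set.finite_range (fun q : Q => ((K + 1 : ℕ), q)))
      rintro ⟨a, q⟩ ⟨_, hl⟩
      exact ⟨q, by simp at hl; simp [hl]⟩
    -- some level-(K+1) vertex has Acc-avoiding paths of every length
    have hex : ∀ n, ∃ v ∈ {v : ℕ × Q | v ∈ V ∧ v.1 = K + 1}, Pg v n := by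
      intro n
      obtain ⟨m, p, h1, h2, h3, h4, h5⟩ := hcon (K + 1 + n) (by omega)
      have hm : m = n := by
        have := lev_aux hlev p m h3 m le_rfl
        omega
      subst hm
      exact ⟨p 0, ⟨h1, h2⟩, h1, p, rfl, h3, h5⟩
    obtain ⟨g, hgS, hg⟩ := pigeon Pg hdown hSfin hex
    -- from a vertex with avoiding paths of all lengths, some successor also
    -- has avoiding paths of all lengths
    have step : ∀ v : ℕ × Q, (∀ n, Pg v n) → ∃ w, (v, w) ∈ E ∧ ∀ n, Pg w n := by
      intro v hv
      have hex' : ∀ n, ∃ w ∈ {w : ℕ × Q | (v, w) ∈ E}, Pg w n := by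
        intro n
        obtain ⟨hvV, p, h0, he, ha⟩ := hv (n + 1)
        have he0 : (v, p 1) ∈ E := h0 ▸ he 0 (by omega)
        exact ⟨p 1, he0, (hEV _ he0).2, fun k => p (k + 1), rfl,
          fun k hk => he (k + 1) (by omega), fun k hk => ha (k + 1) (by omega)⟩
      obtain ⟨w, hwE, hw⟩ := pigeon Pg hdown (hfin v) hex'
      exact ⟨w, hwE, hw⟩
    -- build an infinite Acc-avoiding chain from g
    obtain ⟨f, hf⟩ : ∃ f : {v : ℕ × Q // ∀ n, Pg v n} → {v : ℕ × Q // ∀ n, Pg v n},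
        ∀ x, (x.1, (f x).1) ∈ E :=
      ⟨fun x => ⟨(step x.1 x.2).choose, (step x.1 x.2).choose_spec.2⟩,
        fun x => (step x.1 x.2).choose_spec.1⟩
    set x0 : {v : ℕ × Q // ∀ n, Pg v n} := ⟨g, hg⟩ with hx0
    have chainEdge : ∀ j : ℕ, ((f^[j] x0).1, (f^[j + 1] x0).1) ∈ E := by
      intro j
      rw [Function.iterate_succ_apply']
      exact hf _
    -- prefix path from init to g
    have pref : ∀ v : ℕ × Q, Relation.ReflTransGen (fun a b => (a, b) ∈ E) init v →
        ∃ n : ℕ, ∃ q : ℕ → ℕ × Q, q 0 = init ∧ q n = v ∧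
          ∀ k, k < n → (q k, q (k + 1)) ∈ E := by
      intro v hv
      induction hv with
      | refl => exact ⟨0, fun _ => init, rfl, rfl, by omega⟩
      | @tail b c hab hbc ih =>
        obtain ⟨n, q, hq0, hqn, hqe⟩ := ih
        refine ⟨n + 1, fun k => if k ≤ n then q k else c, by simp [hq0], by simp, ?_⟩
        intro k hk
        by_cases hkn : k < n
        · simp only [show k ≤ n by omega, if_true, show k + 1 ≤ n by omega, if_true]
          exact hqe k hkn
        · have hk' : k = n := by omega
          subst hk'
          simp only [le_refl, if_true, show ¬ (k + 1 ≤ k) by omega, if_false]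
          exact hqn ▸ hbc
    obtain ⟨n, q, hq0, hqn, hqe⟩ := pref g (hreach g hgS.1)
    have hn : n = K + 1 := by
      have := lev_aux hlev q n hqe n le_rfl
      rw [hqn, hq0] at this
      have := hgS.2
      omega
    -- the glued infinite path
    set Pfull : ℕ → ℕ × Q := fun k => if k ≤ n then q k else (f^[k - n] x0).1
      with hPfull
    have hP0 : Pfull 0 = init := by simp [hPfull, hq0]
    have hgx0 : q n = (f^[0] x0).1 := by simp [hqn, hx0]
    have hPe : ∀ k, (Pfull k, Pfull (k + 1)) ∈ E := by
      intro k
      by_cases hk1 : k + 1 ≤ n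
      · simp only [hPfull, show k ≤ n by omega, if_true, hk1, if_true]
        exact hqe k (by omega)
      · by_cases hk : k ≤ n
        · have hkn : k = n := by omega
          subst hkn
          simp only [hPfull, le_refl, if_true, hk1, if_false, hgx0,
            show k + 1 - k = 0 + 1 by omega]
          exact chainEdge 0
        · simp only [hPfull, hk, if_false, hk1, if_false,
            show k + 1 - n = (k - n) + 1 by omega]
          exact chainEdge (k - n)
    have hInf := h Pfull hP0 hPe
    have hsub : {k | Pfull k ∈ Acc} ⊆ Set.Iio n := by
      intro k hk
      simp only [Set.mem_Iio]
      by_contra hkn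
      push_neg at hkn
      have hnot : Pfull k ∉ Acc := by
        by_cases hke : k = n
        · subst hke
          simp only [hPfull, le_refl, if_true, hqn]
          exact notAcc g hg
        · simp only [hPfull, show ¬ (k ≤ n) by omega, if_false]
          exact notAcc _ (f^[k - n] x0).2
      exact hnot hk
    exact hInf (Set.Finite.subset (Set.finite_Iio n) hsub)
  choose F hF1 hF2 using key
  refine ⟨fun i => F^[i] 0, by simp, ?_, ?_⟩
  · apply strictMono_nat_of_lt_succ
    intro i
    rw [Function.iterate_succ_apply']
    exact hF1 _
  · intro i m p h1 h2 h3 h4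
    exact hF2 (F^[i] 0) m p h1 h2 h3 (h4.trans (Function.iterate_succ_apply' F i 0))
end

section
/- Let Q be a nonempty finite set and Q' ⊆ Q nonempty. For every positive first-order Q-constraint θ (a positive sentence over monadic predicates Q with equality), there exists a positive first-order constraint θ_s over the predicate set Q ∪ 2^Q that is 2^Q-functional in one direction and simulates θ, in the following sense: (1) for every minimal model (S, I) of θ and every s ∈ S, the interpretation obtained from I by replacing I(s) with the singleton {I(s)} ⊆ 2^Q is a model of θ_s; (2) for every minimal model (S, I) of θ_s, there is a unique s ∈ S with I(s) = {Q''} for some Q'' ∈ 2^Q, and replacing I(s) by Q'' yields a model of θ. -/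
/-- Positive first-order one-step constraints over a set `P` of monadic
predicates, with first-order variables drawn from `ℕ`. -/
inductive OneStep (P : Type) : Type where
  | top : OneStep P
  | bot : OneStep P
  | atom : P → ℕ → OneStep P
  | eq : ℕ → ℕ → OneStep P
  | neq : ℕ → ℕ → OneStep P
  | and : OneStep P → OneStep P → OneStep P
  | or : OneStep P → OneStep P → OneStep P
  | ex : ℕ → OneStep P → OneStep P
  | all : ℕ → OneStep P → OneStep P

/-- Satisfaction of a one-step formula under a valuation. -/
def OSat {P S : Type} (I : S → Set P) : OneStep P → (ℕ → S) → Prop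
  | .top, _ => True
  | .bot, _ => False
  | .atom q x, V => q ∈ I (V x)
  | .eq x y, V => V x = V y
  | .neq x y, V => V x ≠ V y
  | .and θ η, V => OSat I θ V ∧ OSat I η V
  | .or θ η, V => OSat I θ V ∨ OSat I η V
  | .ex x θ, V => ∃ s : S, OSat I θ (Function.update V x s)
  | .all x θ, V => ∀ s : S, OSat I θ (Function.update V x s)

/-- Satisfaction of a constraint (sentence) by a one-step interpretation. -/
def SatC {P S : Type} (I : S → Set P) (θ : OneStep P) : Prop :=
  ∀ V : ℕ → S, OSat I θ V

/-- A basic formula `θ=(T_∃, T_∀)`, given by the list of its existential types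
and the list of its universal types. -/
structure BasicFormula (P : Type) where
  ex : List (Set P)
  fa : List (Set P)

/-- Satisfaction of a basic formula: pairwise distinct witnesses realizing the
existential types, all other elements realizing some universal type. -/
def SatB {P S : Type} (I : S → Set P) (b : BasicFormula P) : Prop :=
  ∃ x : Fin b.ex.length → S, Function.Injective x ∧
    (∀ i, b.ex.get i ⊆ I (x i)) ∧
    ∀ y : S, (∀ i, y ≠ x i) → ∃ B ∈ b.fa, B ⊆ I y

/-- Satisfaction of a disjunction of basic formulas. -/
def SatD {P S : Type} (I : S → Set P) (L : List (BasicFormula P)) : Prop :=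
  ∃ b ∈ L, SatB I b

/-- A basic formula over the predicates `Q ∪ 2^Q` is `2^Q`-functional in one
direction: exactly one existential type is a singleton consisting of an element
of `2^Q`, and no other occurring type contains elements of `2^Q`. -/
def FunctionalOneDir {Q : Type} (b : BasicFormula (Q ⊕ Set Q)) : Prop :=
  ∃ i : Fin b.ex.length,
    (∃ Q'' : Set Q, b.ex.get i = {Sum.inr Q''}) ∧
    (∀ j : Fin b.ex.length, j ≠ i → ∀ a ∈ b.ex.get j, ∃ q : Q, a = Sum.inl q) ∧
    (∀ B ∈ b.fa, ∀ a ∈ B, ∃ q : Q, a = Sum.inl q)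

/-- `(S, I)` is a minimal model for the satisfaction predicate `Sat`. -/
def MinimalModel {P S : Type} (Sat : (S → Set P) → Prop) (I : S → Set P) : Prop :=
  Sat I ∧ ∀ I' : S → Set P, (∀ s, I' s ⊆ I s) → Sat I' → I' = I


noncomputable section
open Classical
namespace Stmt17Aux

/-- All variables occurring in a formula. -/
def vars {P : Type} : OneStep P → Finset ℕ
  | .top => ∅
  | .bot => ∅
  | .atom _ x => {x}
  | .eq x y => {x, y}
  | .neq x y => {x, y}
  | .and a b => vars a ∪ vars b
  | .or a b => vars a ∪ vars b
  | .ex x a => insert x (vars a)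
  | .all x a => insert x (vars a)

lemma osat_mono {P S : Type} {I I' : S → Set P} (h : ∀ s, I s ⊆ I' s) :
    ∀ (θ : OneStep P) (V : ℕ → S), OSat I θ V → OSat I' θ V := by
  intro θ
  induction θ with
  | top => intro V hV; trivial
  | bot => intro V hV; exact hV.elim
  | atom q x => intro V hV; exact h _ hV
  | eq x y => intro V hV; exact hV
  | neq x y => intro V hV; exact hV
  | and a b iha ihb => intro V hV; exact ⟨iha V hV.1, ihb V hV.2⟩
  | or a b iha ihb => intro V hV; exact hV.elim (fun hh => Or.inl (iha V hh)) (fun hh => Or.inr (ihb V hh))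
  | ex x a ih => intro V hV; obtain ⟨s, hs⟩ := hV; exact ⟨s, ih _ hs⟩
  | all x a ih => intro V hV s; exact ih _ (hV s)

lemma satC_mono {P S : Type} {I I' : S → Set P} (h : ∀ s, I s ⊆ I' s)
    {θ : OneStep P} (hs : SatC I θ) : SatC I' θ :=
  fun V => osat_mono h θ V (hs V)

/-- there are at least `k` elements of exact type `τ`. -/
def AtLeast {Q S : Type} (I : S → Set Q) (τ : Set Q) (k : ℕ) : Prop :=
  ∃ f : Fin k → S, Function.Injective f ∧ ∀ i, I (f i) = τ

lemma atLeast_zero {Q S : Type} (I : S → Set Q) (τ : Set Q) : AtLeast I τ 0 :=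
  ⟨Fin.elim0, fun i => i.elim0, fun i => i.elim0⟩

lemma AtLeast.anti {Q S : Type} {I : S → Set Q} {τ : Set Q} {k k' : ℕ}
    (hk : k' ≤ k) (h : AtLeast I τ k) : AtLeast I τ k' := by
  obtain ⟨f, hf, ht⟩ := h
  exact ⟨f ∘ Fin.castLE hk, hf.comp (Fin.castLE_injective hk), fun i => ht _⟩

lemma atLeast_succ {Q S : Type} {I : S → Set Q} {τ : Set Q} {k : ℕ}
    {f : Fin k → S} (hf : Function.Injective f) (ht : ∀ i, I (f i) = τ)
    {s : S} (hs : I s = τ) (hfresh : ∀ i, f i ≠ s) : AtLeast I τ (k + 1) := by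
  refine ⟨Fin.snoc f s, ?_, ?_⟩
  · intro i j hij
    rcases Fin.eq_castSucc_or_eq_last i with ⟨i', rfl⟩ | rfl <;>
      rcases Fin.eq_castSucc_or_eq_last j with ⟨j', rfl⟩ | rfl
    · simp only [Fin.snoc_castSucc] at hij
      exact congrArg Fin.castSucc (hf hij)
    · simp only [Fin.snoc_castSucc, Fin.snoc_last] at hij
      exact absurd hij (hfresh _)
    · simp only [Fin.snoc_castSucc, Fin.snoc_last] at hij
      exact absurd hij.symm (hfresh _)
    · rfl
  · intro i
    rcases Fin.eq_castSucc_or_eq_last i with ⟨i', rfl⟩ | rfl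
    · simpa using ht i'
    · simpa using hs

/-- from a finset of elements all of exact type τ. -/
lemma atLeast_of_finset {Q S : Type} {I : S → Set Q} {τ : Set Q}
    (T : Finset S) (h : ∀ a ∈ T, I a = τ) : AtLeast I τ T.card := by
  refine ⟨fun i => T.toList.get (Fin.cast (by simp) i), ?_, ?_⟩
  · intro i j hij
    have := (List.Nodup.get_inj_iff T.nodup_toList).mp hij
    exact Fin.cast_injective _ (by exact this)
  · intro i
    exact h _ (by rw [← Finset.mem_toList]; exact List.get_mem _ _)

end Stmt17Aux
namespace Stmt17Aux

/-- Partial-isomorphism condition between valuations on a set of variables. -/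
def Rel {Q S S₂ : Type} (I : S → Set Q) (I₂ : S₂ → Set Q)
    (V : ℕ → S) (V' : ℕ → S₂) (A : Finset ℕ) : Prop :=
  (∀ x ∈ A, I (V x) = I₂ (V' x)) ∧
    ∀ x ∈ A, ∀ y ∈ A, (V x = V y ↔ V' x = V' y)

lemma Rel.symm {Q S S₂ : Type} {I : S → Set Q} {I₂ : S₂ → Set Q}
    {V : ℕ → S} {V' : ℕ → S₂} {A : Finset ℕ} (h : Rel I I₂ V V' A) :
    Rel I₂ I V' V A :=
  ⟨fun x hx => (h.1 x hx).symm, fun x hx y hy => (h.2 x hx y hy).symm⟩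

lemma Rel.mono {Q S S₂ : Type} {I : S → Set Q} {I₂ : S₂ → Set Q}
    {V : ℕ → S} {V' : ℕ → S₂} {A B : Finset ℕ} (hAB : A ⊆ B)
    (h : Rel I I₂ V V' B) : Rel I I₂ V V' A :=
  ⟨fun x hx => h.1 x (hAB hx), fun x hx y hy => h.2 x (hAB hx) y (hAB hy)⟩

/-- capped profile equality. -/
def ProfEq {Q S S₂ : Type} (I : S → Set Q) (I₂ : S₂ → Set Q) (N : ℕ) : Prop :=
  ∀ τ k, k ≤ N → (AtLeast I τ k ↔ AtLeast I₂ τ k)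

lemma ProfEq.symm {Q S S₂ : Type} {I : S → Set Q} {I₂ : S₂ → Set Q} {N : ℕ}
    (h : ProfEq I I₂ N) : ProfEq I₂ I N :=
  fun τ k hk => (h τ k hk).symm

lemma card_image_eq_of_iff {S S₂ : Type} (Y : Finset ℕ) (f : ℕ → S) (g : ℕ → S₂)
    (h : ∀ a ∈ Y, ∀ b ∈ Y, (f a = f b ↔ g a = g b)) :
    (Y.image f).card = (Y.image g).card := by
  classical
  induction Y using Finset.induction with
  | empty => simp
  | @insert a Y ha ih =>
    rw [Finset.image_insert, Finset.image_insert]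
    have hmem : f a ∈ Y.image f ↔ g a ∈ Y.image g := by
      simp only [Finset.mem_image]
      constructor
      · rintro ⟨b, hb, hba⟩
        exact ⟨b, hb, (h b (Finset.mem_insert_of_mem hb) a (Finset.mem_insert_self a Y)).mp hba⟩
      · rintro ⟨b, hb, hba⟩
        exact ⟨b, hb, (h b (Finset.mem_insert_of_mem hb) a (Finset.mem_insert_self a Y)).mpr hba⟩
    have ih' := ih (fun x hx y hy =>
      h x (Finset.mem_insert_of_mem hx) y (Finset.mem_insert_of_mem hy))
    by_cases hfa : f a ∈ Y.image f
    · rw [Finset.insert_eq_self.mpr hfa, Finset.insert_eq_self.mpr (hmem.mp hfa), ih']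
    · rw [Finset.card_insert_of_notMem hfa,
        Finset.card_insert_of_notMem (fun hh => hfa (hmem.mpr hh)), ih']

/-- The matching (back-and-forth) lemma. -/
lemma matching {Q S S₂ : Type} {I : S → Set Q} {I₂ : S₂ → Set Q} {N : ℕ}
    (hprof : ProfEq I I₂ N) {A : Finset ℕ} (hA : A.card < N)
    {V : ℕ → S} {V' : ℕ → S₂} (hR : Rel I I₂ V V' A) (x : ℕ) (s : S) :
    ∃ s' : S₂, Rel I I₂ (Function.update V x s) (Function.update V' x s')
      (insert x A) := by
  classical
  by_cases hcase : ∃ y ∈ A, y ≠ x ∧ V y = s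
  · obtain ⟨y, hyA, hyx, hys⟩ := hcase
    refine ⟨V' y, ?_, ?_⟩
    · intro z hz
      rcases Finset.mem_insert.mp hz with rfl | hzA
      · rw [Function.update_self, Function.update_self, ← hys]
        exact hR.1 y hyA
      · by_cases hzx : z = x
        · subst hzx
          rw [Function.update_self, Function.update_self, ← hys]
          exact hR.1 y hyA
        · rw [Function.update_of_ne hzx, Function.update_of_ne hzx]
          exact hR.1 z hzA
    · intro z hz w hw
      have key : ∀ u, u ∈ insert x A → (Function.update V x s u = s ↔
          Function.update V' x (V' y) u = V' y) := by
        intro u hu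
        by_cases hux : u = x
        · subst hux; simp
        · rw [Function.update_of_ne hux, Function.update_of_ne hux, ← hys]
          exact hR.2 u (Finset.mem_insert.mp hu |>.resolve_left hux) y hyA
      by_cases hzx : z = x
      · subst hzx
        rw [Function.update_self, Function.update_self]
        constructor
        · intro h; exact ((key w hw).mp h.symm).symm
        · intro h; exact ((key w hw).mpr h.symm).symm
      · by_cases hwx : w = x
        · subst hwx
          rw [Function.update_self, Function.update_self]
          rw [Function.update_of_ne hzx, Function.update_of_ne hzx]
          have := key z hz
          rw [Function.update_of_ne hzx, Function.update_of_ne hzx] at this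
          exact this
        · rw [Function.update_of_ne hzx, Function.update_of_ne hzx,
            Function.update_of_ne hwx, Function.update_of_ne hwx]
          exact hR.2 z (Finset.mem_insert.mp hz |>.resolve_left hzx) w
            (Finset.mem_insert.mp hw |>.resolve_left hwx)
  · -- fresh element case
    push_neg at hcase
    set τ := I s with hτ
    set Y := (A.erase x).filter (fun y => I (V y) = τ) with hY
    set W := Y.image V with hW
    set W' := Y.image V' with hW'
    have hsW : s ∉ W := by
      intro hs
      obtain ⟨y, hy, hys⟩ := Finset.mem_image.mp hs
      have hyA := Finset.mem_of_mem_erase (Finset.mem_of_mem_filter y hy)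
      have hyx := Finset.ne_of_mem_erase (Finset.mem_of_mem_filter y hy)
      exact hcase y hyA hyx hys
    have hcards : W.card = W'.card := by
      have hmemA : ∀ z ∈ Y, z ∈ A := fun z hz =>
        Finset.mem_of_mem_erase (Finset.mem_of_mem_filter z hz)
      exact card_image_eq_of_iff Y V V'
        (fun a ha b hb => hR.2 a (hmemA a ha) b (hmemA b hb))
    have hWcard : W.card + 1 ≤ N := by
      have h1 : Y.card ≤ (A.erase x).card := Finset.card_filter_le _ _
      have h2 : (A.erase x).card ≤ A.card := Finset.card_erase_le
      have h3 : W.card ≤ Y.card := Finset.card_image_le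
      omega
    have hatl : AtLeast I τ (W.card + 1) := by
      have h : ∀ a ∈ insert s W, I a = τ := by
        intro a ha
        rcases Finset.mem_insert.mp ha with rfl | haW
        · rfl
        · obtain ⟨y, hy, rfl⟩ := Finset.mem_image.mp haW
          exact (Finset.mem_filter.mp hy).2
      have := atLeast_of_finset (insert s W) h
      rwa [Finset.card_insert_of_notMem hsW] at this
    have hatl2 : AtLeast I₂ τ (W.card + 1) := (hprof τ _ hWcard).mp hatl
    obtain ⟨f, hf, hft⟩ := hatl2
    have hex : ∃ i, f i ∉ W' := by
      by_contra hcon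
      push_neg at hcon
      obtain ⟨i, -, j, -, hij, hfij⟩ :=
        Finset.exists_ne_map_eq_of_card_lt_of_maps_to
          (s := (Finset.univ : Finset (Fin (W.card + 1)))) (t := W')
          (by simp [← hcards]) (fun i _ => hcon i)
      exact hij (hf hfij)
    obtain ⟨i, hi⟩ := hex
    refine ⟨f i, ?_, ?_⟩
    · intro z hz
      by_cases hzx : z = x
      · subst hzx
        rw [Function.update_self, Function.update_self, hft]
      · rw [Function.update_of_ne hzx, Function.update_of_ne hzx]
        exact hR.1 z (Finset.mem_insert.mp hz |>.resolve_left hzx)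
    · intro z hz w hw
      have keyL : ∀ u ∈ A, u ≠ x → V u ≠ s := fun u hu hux h => hcase u hu hux h
      have keyR : ∀ u ∈ A, u ≠ x → V' u ≠ f i := by
        intro u hu hux h
        apply hi
        have htu : I₂ (V' u) = τ := by rw [h, hft]
        have hmem : u ∈ Y := by
          refine Finset.mem_filter.mpr ⟨Finset.mem_erase.mpr ⟨hux, hu⟩, ?_⟩
          rw [hR.1 u hu]; exact htu
        rw [← h]
        exact Finset.mem_image.mpr ⟨u, hmem, rfl⟩
      by_cases hzx : z = x <;> by_cases hwx : w = x
      · subst hzx; subst hwx; simp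
      · subst hzx
        rw [Function.update_self, Function.update_self,
          Function.update_of_ne hwx, Function.update_of_ne hwx]
        have hwA := Finset.mem_insert.mp hw |>.resolve_left hwx
        constructor
        · intro h; exact absurd h.symm (keyL w hwA hwx)
        · intro h; exact absurd h.symm (keyR w hwA hwx)
      · subst hwx
        rw [Function.update_self, Function.update_self,
          Function.update_of_ne hzx, Function.update_of_ne hzx]
        have hzA := Finset.mem_insert.mp hz |>.resolve_left hzx
        constructor
        · intro h; exact absurd h (keyL z hzA hzx)
        · intro h; exact absurd h (keyR z hzA hzx)
      · rw [Function.update_of_ne hzx, Function.update_of_ne hzx,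
          Function.update_of_ne hwx, Function.update_of_ne hwx]
        exact hR.2 z (Finset.mem_insert.mp hz |>.resolve_left hzx) w
          (Finset.mem_insert.mp hw |>.resolve_left hwx)

end Stmt17Aux
namespace Stmt17Aux

lemma EF {Q S S₂ : Type} {I : S → Set Q} {I₂ : S₂ → Set Q} {N : ℕ}
    (hprof : ProfEq I I₂ N) :
    ∀ (θ : OneStep Q) (V : ℕ → S) (V' : ℕ → S₂),
      (vars θ).card < N → Rel I I₂ V V' (vars θ) →
      (OSat I θ V ↔ OSat I₂ θ V') := by
  intro θ
  induction θ with
  | top => intro V V' _ _; simp [OSat]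
  | bot => intro V V' _ _; simp [OSat]
  | atom q x =>
    intro V V' _ hR
    have := hR.1 x (by simp [vars])
    simp only [OSat, this]
  | eq x y =>
    intro V V' _ hR
    exact hR.2 x (by simp [vars]) y (by simp [vars])
  | neq x y =>
    intro V V' _ hR
    exact not_congr (hR.2 x (by simp [vars]) y (by simp [vars]))
  | and a b iha ihb =>
    intro V V' hN hR
    have hsa : vars a ⊆ vars (a.and b) := by simp [vars]
    have hsb : vars b ⊆ vars (a.and b) := by simp [vars]
    exact and_congr
      (iha V V' (lt_of_le_of_lt (Finset.card_le_card hsa) hN) (hR.mono hsa))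
      (ihb V V' (lt_of_le_of_lt (Finset.card_le_card hsb) hN) (hR.mono hsb))
  | or a b iha ihb =>
    intro V V' hN hR
    have hsa : vars a ⊆ vars (a.or b) := by simp [vars]
    have hsb : vars b ⊆ vars (a.or b) := by simp [vars]
    exact or_congr
      (iha V V' (lt_of_le_of_lt (Finset.card_le_card hsa) hN) (hR.mono hsa))
      (ihb V V' (lt_of_le_of_lt (Finset.card_le_card hsb) hN) (hR.mono hsb))
  | ex x a ih =>
    intro V V' hN hR
    have hsub : vars a ⊆ vars (OneStep.ex x a) := by simp [vars]
    have hNa : (vars a).card < N := lt_of_le_of_lt (Finset.card_le_card hsub) hN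
    have hcard : (vars (OneStep.ex x a)).card ≤ N := le_of_lt hN
    constructor
    · rintro ⟨s, hs⟩
      obtain ⟨s', hs'⟩ := matching hprof hN hR x s
      have : Rel I I₂ (Function.update V x s) (Function.update V' x s') (vars a) :=
        hs'.mono (by intro z hz; exact Finset.mem_insert.mpr (Or.inr (hsub hz)))
      exact ⟨s', (ih _ _ hNa this).mp hs⟩
    · rintro ⟨s', hs'⟩
      obtain ⟨s, hs⟩ := matching hprof.symm hN hR.symm x s'
      have : Rel I I₂ (Function.update V x s) (Function.update V' x s') (vars a) :=
        hs.symm.mono (by intro z hz; exact Finset.mem_insert.mpr (Or.inr (hsub hz)))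
      exact ⟨s, (ih _ _ hNa this).mpr hs'⟩
  | all x a ih =>
    intro V V' hN hR
    have hsub : vars a ⊆ vars (OneStep.all x a) := by simp [vars]
    have hNa : (vars a).card < N := lt_of_le_of_lt (Finset.card_le_card hsub) hN
    constructor
    · intro h s'
      obtain ⟨s, hs⟩ := matching hprof.symm hN hR.symm x s'
      have : Rel I I₂ (Function.update V x s) (Function.update V' x s') (vars a) :=
        hs.symm.mono (by intro z hz; exact Finset.mem_insert.mpr (Or.inr (hsub hz)))
      exact (ih _ _ hNa this).mp (h s)
    · intro h s
      obtain ⟨s', hs'⟩ := matching hprof hN hR x s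
      have : Rel I I₂ (Function.update V x s) (Function.update V' x s') (vars a) :=
        hs'.mono (by intro z hz; exact Finset.mem_insert.mpr (Or.inr (hsub hz)))
      exact (ih _ _ hNa this).mpr (h s')

/-- valuation transfer -/
lemma val_transfer {Q S S₂ : Type} [Nonempty S] {I : S → Set Q} {I₂ : S₂ → Set Q}
    {N : ℕ} (hprof : ProfEq I I₂ N) (V₂ : ℕ → S₂) :
    ∀ l : List ℕ, l.toFinset.card < N → ∃ V : ℕ → S, Rel I I₂ V V₂ l.toFinset := by
  intro l
  induction l with
  | nil =>
    intro _
    exact ⟨fun _ => Classical.arbitrary S, by simp, by simp⟩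
  | cons x l ih =>
    intro hN
    have hsub : l.toFinset ⊆ (x :: l).toFinset := by intro z hz; simp_all
    obtain ⟨V, hV⟩ := ih (lt_of_le_of_lt (Finset.card_le_card hsub) hN)
    have hcard : l.toFinset.card < N := lt_of_le_of_lt (Finset.card_le_card hsub) hN
    obtain ⟨s, hs⟩ := matching hprof.symm hcard hV.symm x (V₂ x)
    rw [Function.update_eq_self] at hs
    refine ⟨Function.update V x s, ?_⟩
    have := hs.symm
    simpa using this

/-- Satisfaction of constraints only depends on the capped type profile. -/
lemma satC_transfer {Q S S₂ : Type} [Nonempty S] [Nonempty S₂]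
    {I : S → Set Q} {I₂ : S₂ → Set Q} {θ : OneStep Q}
    (hprof : ProfEq I I₂ ((vars θ).card + 1)) (h : SatC I θ) : SatC I₂ θ := by
  intro V₂
  obtain ⟨V, hV⟩ := val_transfer hprof V₂ (vars θ).toList
    (by rw [Finset.toList_toFinset]; omega)
  rw [Finset.toList_toFinset] at hV
  exact (EF hprof θ V V₂ (by omega) hV).mp (h V)

end Stmt17Aux
namespace Stmt17Aux

/-- Exact satisfaction of a basic formula. -/
def ExactB {P S : Type} (I : S → Set P) (b : BasicFormula P) : Prop :=
  ∃ x : Fin b.ex.length → S, Function.Injective x ∧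
    (∀ i, I (x i) = b.ex.get i) ∧ ∀ y : S, (∀ i, y ≠ x i) → I y ∈ b.fa

lemma exactB_satB {P S : Type} {I : S → Set P} {b : BasicFormula P}
    (h : ExactB I b) : SatB I b := by
  obtain ⟨x, hinj, hty, hfa⟩ := h
  exact ⟨x, hinj, fun i => (hty i).symm ▸ subset_rfl,
    fun y hy => ⟨I y, hfa y hy, subset_rfl⟩⟩

/-- Any model of a basic formula can be shrunk to an exact model. -/
lemma satB_shrink {P S : Type} {I : S → Set P} {b : BasicFormula P}
    (h : SatB I b) : ∃ I' : S → Set P, (∀ s, I' s ⊆ I s) ∧ ExactB I' b := by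
  classical
  obtain ⟨x, hinj, hty, hfa⟩ := h
  choose B hBmem hBsub using hfa
  refine ⟨fun s => if h : ∃ i, s = x i then b.ex.get h.choose else
    if h2 : ∀ i, s ≠ x i then B s h2 else ∅, ?_, ?_⟩
  · intro s a ha
    by_cases h : ∃ i, s = x i
    · simp only [dif_pos h] at ha
      have := hty h.choose ha
      rwa [← h.choose_spec] at this
    · push_neg at h
      simp only [dif_neg (not_exists.mpr fun i hi => h i hi), dif_pos h] at ha
      exact hBsub s h ha
  · refine ⟨x, hinj, ?_, ?_⟩
    · intro i
      have h : ∃ j, x i = x j := ⟨i, rfl⟩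
      simp only [dif_pos h]
      congr 1
      exact (hinj h.choose_spec).symm
    · intro y hy
      have h : ¬ ∃ i, y = x i := not_exists.mpr fun i hi => hy i hi
      simp only [dif_neg h, dif_pos hy]
      exact hBmem y hy

/-- A minimal model of a disjunction satisfies some disjunct exactly. -/
lemma minimal_exact {P S : Type} {I : S → Set P} {L : List (BasicFormula P)}
    (h : MinimalModel (fun J => SatD J L) I) :
    ∃ b ∈ L, ExactB I b := by
  obtain ⟨⟨b, hbL, hb⟩, hmin⟩ := h
  obtain ⟨I', hsub, hex⟩ := satB_shrink hb
  have : I' = I := hmin I' hsub ⟨b, hbL, exactB_satB hex⟩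
  exact ⟨b, hbL, this ▸ hex⟩

end Stmt17Aux
namespace Stmt17Aux

lemma atLeast_of_list {Q S : Type} {I : S → Set Q} {τ : Set Q}
    {ws : List S} (hnd : ws.Nodup) (h : ∀ a ∈ ws, I a = τ) :
    AtLeast I τ ws.length := by
  refine ⟨ws.get, ?_, fun i => h _ (List.get_mem ws _)⟩
  intro i j hij
  exact (hnd.get_inj_iff).mp hij

lemma le_length_of_inj_mem {S : Type} {k : ℕ} {f : Fin k → S}
    (hf : Function.Injective f) {ws : List S} (h : ∀ i, f i ∈ ws) :
    k ≤ ws.length := by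
  classical
  have h1 : (List.ofFn f).toFinset ⊆ ws.toFinset := by
    intro a ha
    rw [List.mem_toFinset, List.mem_ofFn] at ha
    obtain ⟨i, rfl⟩ := ha
    exact List.mem_toFinset.mpr (h i)
  have h2 := Finset.card_le_card h1
  rw [List.toFinset_card_of_nodup (List.nodup_ofFn.mpr hf)] at h2
  simp only [List.length_ofFn] at h2
  exact h2.trans (ws.toFinset_card_le)

lemma nodup_flatMap' {A S : Type} (tl : List A) (w : A → List S)
    (hnd : tl.Nodup) (hw : ∀ a ∈ tl, (w a).Nodup)
    (hdisj : ∀ a ∈ tl, ∀ b ∈ tl, a ≠ b → ∀ s ∈ w a, s ∉ w b) :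
    (tl.flatMap w).Nodup := by
  induction tl with
  | nil => simp
  | cons a tl ih =>
    rw [List.flatMap_cons, List.nodup_append]
    refine ⟨hw a (by simp), ih (List.nodup_cons.mp hnd).2
      (fun x hx => hw x (by simp [hx]))
      (fun x hx y hy => hdisj x (by simp [hx]) y (by simp [hy])), ?_⟩
    intro s hs t hs' hst
    subst hst
    obtain ⟨b, hb, hsb⟩ := List.mem_flatMap.mp hs'
    have hab : a ≠ b := fun h => (List.nodup_cons.mp hnd).1 (h ▸ hb)
    exact hdisj a (by simp) b (by simp [hb]) hab s hs hsb

lemma countP_flatMap_replicate {A : Type} [DecidableEq A] (g : A → ℕ) (τ : A) :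
    ∀ tl : List A, tl.Nodup → τ ∈ tl →
      (tl.flatMap fun σ => List.replicate (g σ) σ).countP (fun σ => decide (σ = τ)) = g τ := by
  have hzero : ∀ tl : List A, τ ∉ tl →
      (tl.flatMap fun σ => List.replicate (g σ) σ).countP (fun σ => decide (σ = τ)) = 0 := by
    intro tl
    induction tl with
    | nil => simp
    | cons a tl ih =>
      intro hτ
      rw [List.flatMap_cons, List.countP_append, List.countP_replicate]
      have ha : a ≠ τ := fun h => hτ (by simp [h])
      rw [if_neg (by simpa using ha), ih (fun h => hτ (by simp [h]))]
  intro tl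
  induction tl with
  | nil => simp
  | cons a tl ih =>
    intro hnd hτ
    rw [List.flatMap_cons, List.countP_append, List.countP_replicate]
    rcases List.mem_cons.mp hτ with rfl | hτ'
    · rw [if_pos (by simp), hzero tl (List.nodup_cons.mp hnd).1, Nat.add_zero]
    · have ha : a ≠ τ := fun h => (List.nodup_cons.mp hnd).1 (h ▸ hτ')
      rw [if_neg (by simpa using ha), ih (List.nodup_cons.mp hnd).2 hτ', Nat.zero_add]

lemma length_flatMap_replicate_le {A : Type} (g : A → ℕ) (N : ℕ) (hg : ∀ a, g a ≤ N) :
    ∀ tl : List A, (tl.flatMap fun σ => List.replicate (g σ) σ).length ≤ N * tl.length := by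
  intro tl
  induction tl with
  | nil => simp
  | cons a tl ih =>
    rw [List.flatMap_cons, List.length_append, List.length_replicate, List.length_cons]
    have := hg a
    calc g a + (tl.flatMap fun σ => List.replicate (g σ) σ).length
        ≤ N + N * tl.length := by omega
      _ = N * (tl.length + 1) := by ring

/-- bridging: witness functions vs witness lists. -/
lemma realizes_of_list {Q S : Type} {I : S → Set Q} {ws : List S} {l : List (Set Q)}
    (hnd : ws.Nodup) (hmap : ws.map I = l) :
    ∃ x : Fin l.length → S, Function.Injective x ∧ (∀ i, I (x i) = l.get i) ∧
      ∀ y : S, (∀ i, y ≠ x i) ↔ y ∉ ws := by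
  have hlen : l.length = ws.length := by rw [← hmap, List.length_map]
  refine ⟨fun i => ws.get (Fin.cast hlen i), ?_, ?_, ?_⟩
  · intro i j hij
    exact Fin.cast_injective _ ((hnd.get_inj_iff).mp hij)
  · intro i
    subst hmap
    simp only [List.getElem_map, List.get_eq_getElem, Fin.coe_cast]
  · intro y
    constructor
    · intro h hy
      obtain ⟨i, hi⟩ := List.mem_iff_get.mp hy
      exact h (Fin.cast hlen.symm i) (by simp [← hi])
    · intro hy i hi
      exact hy (hi ▸ List.get_mem ws _)

end Stmt17Aux
namespace Stmt17Aux

variable {Q : Type} [Finite Q]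

/-- The cap. -/
def NN (θ : OneStep Q) : ℕ := (vars θ).card + 1

/-- enumeration of all types. -/
noncomputable def tlQ (Q : Type) [Finite Q] : List (Set Q) :=
  (@Finset.univ (Set Q) (@Set.fintype Q (Fintype.ofFinite Q))).toList

lemma tlQ_nodup : (tlQ Q).Nodup := Finset.nodup_toList _

lemma mem_tlQ (τ : Set Q) : τ ∈ tlQ Q := by
  rw [tlQ, Finset.mem_toList]
  exact @Finset.mem_univ _ (@Set.fintype Q (Fintype.ofFinite Q)) τ

/-- capped count of a type. -/
noncomputable def kp {S : Type} (N : ℕ) (I : S → Set Q) (τ : Set Q) : ℕ :=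
  Nat.findGreatest (fun k => AtLeast I τ k) N

/-- abundant types. -/
def FF {S : Type} (N : ℕ) (I : S → Set Q) : Set (Set Q) := {τ | AtLeast I τ (N + 1)}

noncomputable def exlist {S : Type} (N : ℕ) (I : S → Set Q) : List (Set Q) :=
  (tlQ Q).flatMap fun τ => List.replicate (kp N I τ) τ

noncomputable def falist {S : Type} (N : ℕ) (I : S → Set Q) : List (Set Q) :=
  (Set.toFinite (FF N I)).toFinset.toList

noncomputable def bI {S : Type} (N : ℕ) (I : S → Set Q) : BasicFormula Q :=
  ⟨exlist N I, falist N I⟩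

lemma mem_falist {S : Type} {N : ℕ} {I : S → Set Q} {τ : Set Q} :
    τ ∈ falist N I ↔ τ ∈ FF N I := by
  rw [falist, Finset.mem_toList, Set.Finite.mem_toFinset]

lemma kp_spec {S : Type} (N : ℕ) (I : S → Set Q) (τ : Set Q) :
    AtLeast I τ (kp N I τ) :=
  Nat.findGreatest_spec (Nat.zero_le N) (atLeast_zero I τ)

lemma kp_le {S : Type} (N : ℕ) (I : S → Set Q) (τ : Set Q) : kp N I τ ≤ N :=
  Nat.findGreatest_le N

lemma le_kp {S : Type} {N k : ℕ} {I : S → Set Q} {τ : Set Q}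
    (hk : k ≤ N) (h : AtLeast I τ k) : k ≤ kp N I τ :=
  Nat.le_findGreatest hk h

lemma kp_max {S : Type} {N : ℕ} {I : S → Set Q} {τ : Set Q}
    (h : τ ∉ FF N I) : ¬ AtLeast I τ (kp N I τ + 1) := by
  rcases Nat.lt_or_ge (kp N I τ) N with hlt | hge
  · exact Nat.findGreatest_is_greatest (P := fun k => AtLeast I τ k) (n := N)
      (by rw [← kp]; omega) (by omega)
  · have : kp N I τ = N := le_antisymm (kp_le N I τ) hge
    rw [this]; exact h

lemma exlist_countP {S : Type} (N : ℕ) (I : S → Set Q) (τ : Set Q) :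
    (exlist N I).countP (fun σ => decide (σ = τ)) = kp N I τ := by
  classical
  exact countP_flatMap_replicate _ τ (tlQ Q) tlQ_nodup (mem_tlQ τ)

/-- The canonical basic formula is satisfied by its model. -/
lemma satB_bI {S : Type} (N : ℕ) (I : S → Set Q) : SatB I (bI N I) := by
  classical
  set w : Set Q → List S := fun τ => List.ofFn (kp_spec N I τ).choose with hw
  have hwnd : ∀ τ, (w τ).Nodup := fun τ =>
    List.nodup_ofFn.mpr (kp_spec N I τ).choose_spec.1
  have hwty : ∀ τ, ∀ s ∈ w τ, I s = τ := by
    intro τ s hs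
    obtain ⟨i, rfl⟩ := List.mem_ofFn.mp hs
    exact (kp_spec N I τ).choose_spec.2 i
  have hwlen : ∀ τ, (w τ).length = kp N I τ := fun τ => List.length_ofFn
  set ws : List S := (tlQ Q).flatMap w with hws
  have hnd : ws.Nodup := by
    refine nodup_flatMap' _ _ tlQ_nodup (fun a _ => hwnd a) ?_
    intro a _ b _ hab s hsa hsb
    exact hab ((hwty a s hsa).symm.trans (hwty b s hsb))
  have hmap : ws.map I = exlist N I := by
    rw [hws, exlist, List.map_flatMap]
    congr 1
    funext τ
    rw [List.eq_replicate_iff]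
    exact ⟨by rw [List.length_map, hwlen], by
      intro b hb
      obtain ⟨s, hs, rfl⟩ := List.mem_map.mp hb
      exact hwty τ s hs⟩
  obtain ⟨x, hinj, hty, hiff⟩ := realizes_of_list hnd hmap
  refine ⟨x, hinj, fun i => (hty i).symm ▸ subset_rfl, ?_⟩
  intro y hy
  have hyws : y ∉ ws := (hiff y).mp hy
  have hIy : I y ∈ FF N I := by
    by_contra hcon
    apply kp_max hcon
    obtain ⟨hc1, hc2⟩ := (kp_spec N I (I y)).choose_spec
    refine atLeast_succ hc1 hc2 rfl ?_
    intro i hi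
    apply hyws
    rw [hws]
    refine List.mem_flatMap.mpr ⟨I y, mem_tlQ _, ?_⟩
    have : (kp_spec N I (I y)).choose i ∈ w (I y) :=
      List.mem_ofFn.mpr ⟨i, rfl⟩
    rwa [hi] at this
  exact ⟨I y, mem_falist.mpr hIy, subset_rfl⟩

/-- goodness of a basic formula for `θ` -/
def Good (θ : OneStep Q) (b : BasicFormula Q) : Prop :=
  ∀ (S₂ : Type), Nonempty S₂ → ∀ I₂ : S₂ → Set Q, ExactB I₂ b → SatC I₂ θ

lemma good_bI {S : Type} [Nonempty S] {I : S → Set Q} {θ : OneStep Q}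
    (hsat : SatC I θ) : Good θ (bI (NN θ) I) := by
  classical
  set N := NN θ with hN
  intro S₂ hne I₂ hex
  haveI := hne
  obtain ⟨x, hinj, hty, hfa⟩ := hex
  set ws₂ : List S₂ := List.ofFn x with hws₂
  have hnd₂ : ws₂.Nodup := List.nodup_ofFn.mpr hinj
  have hmap₂ : ws₂.map I₂ = exlist N I := by
    rw [hws₂, List.map_ofFn]
    have : I₂ ∘ x = fun i => (exlist N I).get i := funext hty
    rw [this]
    exact List.ofFn_get _
  have hfilter : ∀ τ : Set Q,
      (ws₂.filter fun s => decide (I₂ s = τ)).length = kp N I τ := by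
    intro τ
    rw [← List.countP_eq_length_filter]
    have h1 : (ws₂.map I₂).countP (fun σ => decide (σ = τ)) =
        ws₂.countP (fun s => decide (I₂ s = τ)) := List.countP_map
    rw [hmap₂, exlist_countP] at h1
    exact h1.symm
  have hprof : ProfEq I I₂ N := by
    intro τ k hk
    have hatl₂ : AtLeast I₂ τ (kp N I τ) := by
      have := atLeast_of_list ((hnd₂.filter _) :
          (ws₂.filter fun s => decide (I₂ s = τ)).Nodup)
        (fun a ha => by simpa using List.of_mem_filter ha)
      rwa [hfilter τ] at this
    constructor
    · intro h
      exact hatl₂.anti (le_kp hk h)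
    · intro h
      by_cases hFF : τ ∈ FF N I
      · exact AtLeast.anti (by omega) hFF
      · obtain ⟨f, hfinj, hfty⟩ := h
        have hmem : ∀ i, f i ∈ ws₂.filter fun s => decide (I₂ s = τ) := by
          intro i
          rw [List.mem_filter]
          constructor
          · by_contra hcon
            have : ∀ j, f i ≠ x j := by
              intro j hj
              exact hcon (List.mem_ofFn.mpr ⟨j, hj.symm⟩)
            have := hfa (f i) this
            rw [hfty i] at this
            exact hFF (mem_falist.mp this)
          · simp [hfty i]
        have hle := le_length_of_inj_mem hfinj hmem
        rw [hfilter τ] at hle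
        exact (kp_spec N I τ).anti hle
  exact satC_transfer hprof hsat

end Stmt17Aux
namespace Stmt17Aux

variable {Q : Type} [Finite Q]

/-- size bound for existential lists. -/
def MM (θ : OneStep Q) : ℕ := NN θ * (tlQ Q).length

/-- candidate data for basic formulas. -/
def Cand (Q : Type) [Finite Q] (θ : OneStep Q) : Type :=
  (Σ n : Fin (MM θ + 1), (Fin n.1 → Set Q)) × Set (Set Q)

noncomputable def toBasic {θ : OneStep Q} (c : Cand Q θ) : BasicFormula Q :=
  ⟨List.ofFn c.1.2, (Set.toFinite c.2).toFinset.toList⟩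

noncomputable instance fintypeCand (θ : OneStep Q) : Fintype (Cand Q θ) := by
  haveI : Fintype Q := Fintype.ofFinite Q
  haveI : Fintype (Set Q) := Set.fintype
  haveI : Fintype (Set (Set Q)) := Set.fintype
  exact instFintypeProd _ _

/-- The normal form of `θ`: the list of all good candidate basic formulas. -/
noncomputable def L0 (θ : OneStep Q) : List (BasicFormula Q) :=
  ((Finset.univ : Finset (Cand Q θ)).toList.filter
    (fun c => decide (Good θ (toBasic c)))).map toBasic

lemma good_of_mem_L0 {θ : OneStep Q} {b : BasicFormula Q} (h : b ∈ L0 θ) :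
    Good θ b := by
  obtain ⟨c, hc, rfl⟩ := List.mem_map.mp h
  have := (List.mem_filter.mp hc).2
  exact of_decide_eq_true this

lemma exlist_length_le {S : Type} (θ : OneStep Q) (I : S → Set Q) :
    (exlist (NN θ) I).length ≤ MM θ := by
  rw [exlist, MM]
  exact length_flatMap_replicate_le _ (NN θ) (fun τ => kp_le _ _ _) (tlQ Q)

lemma bI_mem_L0 {S : Type} {θ : OneStep Q} {I : S → Set Q}
    (hgood : Good θ (bI (NN θ) I)) : bI (NN θ) I ∈ L0 θ := by
  classical
  have hlen : (exlist (NN θ) I).length < MM θ + 1 :=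
    Nat.lt_succ_of_le (exlist_length_le θ I)
  set c : Cand Q θ := ⟨⟨⟨(exlist (NN θ) I).length, hlen⟩,
    fun i => (exlist (NN θ) I).get i⟩, FF (NN θ) I⟩ with hc
  have hcb : toBasic c = bI (NN θ) I := by
    rw [toBasic, bI]
    congr 1
    exact List.ofFn_get _
  rw [← hcb]
  refine List.mem_map.mpr ⟨c, ?_, rfl⟩
  rw [List.mem_filter]
  exact ⟨Finset.mem_toList.mpr (Finset.mem_univ _),
    decide_eq_true (hcb ▸ hgood)⟩

/-- The normal form equivalence, forward direction. -/
lemma satD_L0_of_satC {S : Type} [Nonempty S] {θ : OneStep Q} {I : S → Set Q}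
    (h : SatC I θ) : SatD I (L0 θ) :=
  ⟨bI (NN θ) I, bI_mem_L0 (good_bI h), satB_bI (NN θ) I⟩

/-- The normal form equivalence, backward direction. -/
lemma satC_of_satD_L0 {S : Type} [Nonempty S] {θ : OneStep Q} {I : S → Set Q}
    (h : SatD I (L0 θ)) : SatC I θ := by
  obtain ⟨b, hbL, hb⟩ := h
  obtain ⟨I', hsub, hex⟩ := satB_shrink hb
  exact satC_mono hsub (good_of_mem_L0 hbL S ‹_› I' hex)

/-- exact satisfaction of some disjunct of `L0` by a minimal model. -/
lemma minimal_exactB {S : Type} [Nonempty S] {θ : OneStep Q} {I : S → Set Q}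
    (h : MinimalModel (fun J => SatC J θ) I) :
    ∃ b ∈ L0 θ, ExactB I b := by
  obtain ⟨hsat, hmin⟩ := h
  obtain ⟨b, hbL, hb⟩ := satD_L0_of_satC hsat
  obtain ⟨I', hsub, hex⟩ := satB_shrink hb
  have : I' = I := hmin I' hsub (satC_of_satD_L0 ⟨b, hbL, exactB_satB hex⟩)
  exact ⟨b, hbL, this ▸ hex⟩

end Stmt17Aux
namespace Stmt17Aux

variable {Q : Type} [Finite Q]

def emb (τ : Set Q) : Set (Q ⊕ Set Q) := Sum.inl '' τ

lemma inr_not_mem_emb (τ : Set Q) (σ : Set Q) : Sum.inr σ ∉ emb τ := by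
  rintro ⟨q, -, h⟩
  exact Sum.inl_ne_inr h

lemma preimage_emb (τ : Set Q) : Sum.inl ⁻¹' (emb τ) = τ :=
  Set.preimage_image_eq τ Sum.inl_injective

/-- variant with marked existential witness `i`. -/
def variant1 (b : BasicFormula Q) (i : ℕ) : BasicFormula (Q ⊕ Set Q) :=
  ⟨(b.ex.map emb).set i {Sum.inr (b.ex.getD i ∅)}, b.fa.map emb⟩

/-- variant with marked universal element of type `B`. -/
def variant2 (b : BasicFormula Q) (B : Set Q) : BasicFormula (Q ⊕ Set Q) :=
  ⟨(b.ex.map emb) ++ [{Sum.inr B}], b.fa.map emb⟩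

noncomputable def variants (b : BasicFormula Q) : List (BasicFormula (Q ⊕ Set Q)) :=
  (List.range b.ex.length).map (variant1 b) ++ b.fa.map (variant2 b)

noncomputable def Ls (θ : OneStep Q) : List (BasicFormula (Q ⊕ Set Q)) :=
  (L0 θ).flatMap variants

lemma variant1_ex_length (b : BasicFormula Q) (i : ℕ) :
    (variant1 b i).ex.length = b.ex.length := by
  simp [variant1]

lemma variant1_getElem_self (b : BasicFormula Q) {i : ℕ} (h : i < b.ex.length) :
    (variant1 b i).ex[i]'(by simpa [variant1_ex_length]) = {Sum.inr (b.ex[i]'h)} := by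
  show ((b.ex.map emb).set i _)[i]'_ = _
  simp [List.getD_eq_getElem?_getD, h]

lemma variant1_getElem_ne (b : BasicFormula Q) {i j : ℕ} (hj : j < b.ex.length)
    (hne : i ≠ j) :
    (variant1 b i).ex[j]'(by simpa [variant1_ex_length]) = emb (b.ex[j]'hj) := by
  show ((b.ex.map emb).set i _)[j]'_ = _
  simp [List.getElem_set_ne hne]

lemma variant2_ex_length (b : BasicFormula Q) (B : Set Q) :
    (variant2 b B).ex.length = b.ex.length + 1 := by
  simp [variant2]

lemma variant2_getElem_lt (b : BasicFormula Q) (B : Set Q) {j : ℕ}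
    (hj : j < b.ex.length) :
    (variant2 b B).ex[j]'(by simp [variant2_ex_length]; omega) = emb (b.ex[j]'hj) := by
  simp [variant2, List.getElem_append, hj]

lemma variant2_getElem_last (b : BasicFormula Q) (B : Set Q) :
    (variant2 b B).ex[b.ex.length]'(by simp [variant2_ex_length]) = {Sum.inr B} := by
  simp [variant2, List.getElem_append]

lemma functional_variants {b : BasicFormula Q} {bv : BasicFormula (Q ⊕ Set Q)}
    (h : bv ∈ variants b) : FunctionalOneDir bv := by
  have hfa : ∀ B ∈ b.fa.map emb, ∀ a ∈ B, ∃ q : Q, a = Sum.inl q := by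
    intro B hB a ha
    obtain ⟨τ, -, rfl⟩ := List.mem_map.mp hB
    obtain ⟨q, -, rfl⟩ := ha
    exact ⟨q, rfl⟩
  rcases List.mem_append.mp h with h1 | h2
  · obtain ⟨i, hi, rfl⟩ := List.mem_map.mp h1
    have hi' : i < b.ex.length := List.mem_range.mp hi
    refine ⟨⟨i, by simpa [variant1_ex_length]⟩, ⟨b.ex[i]'hi', ?_⟩, ?_, hfa⟩
    · simpa [List.get_eq_getElem] using variant1_getElem_self b hi'
    · intro j hne a ha
      have hjval : i ≠ j.val := by
        intro hc
        exact hne (Fin.ext hc.symm)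
      have hjlt : j.val < b.ex.length := by
        have := j.2; simpa [variant1_ex_length] using this
      rw [List.get_eq_getElem, variant1_getElem_ne b hjlt hjval] at ha
      obtain ⟨q, -, rfl⟩ := ha
      exact ⟨q, rfl⟩
  · obtain ⟨B, hB, rfl⟩ := List.mem_map.mp h2
    refine ⟨⟨b.ex.length, by simp [variant2_ex_length]⟩, ⟨B, ?_⟩, ?_, hfa⟩
    · simpa [List.get_eq_getElem] using variant2_getElem_last b B
    · intro j hne a ha
      have hjlt : j.val < b.ex.length := by
        have h2 : (j : ℕ) < b.ex.length + 1 :=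
          lt_of_lt_of_eq j.2 (variant2_ex_length b B)
        rcases Nat.lt_succ_iff_lt_or_eq.mp h2 with h | h
        · exact h
        · exact absurd (Fin.ext h) hne
      rw [List.get_eq_getElem, variant2_getElem_lt b B hjlt] at ha
      obtain ⟨q, -, rfl⟩ := ha
      exact ⟨q, rfl⟩

end Stmt17Aux
namespace Stmt17Aux

variable {Q : Type} [Finite Q]

lemma part2 {S : Type} [Nonempty S] {θ : OneStep Q} (I : S → Set Q)
    (hmin : MinimalModel (fun J => SatC J θ) I) (s₀ : S)
    (J : S → Set (Q ⊕ Set Q)) (hJ0 : J s₀ = {Sum.inr (I s₀)})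
    (hJ : ∀ s, s ≠ s₀ → J s = Sum.inl '' I s) : SatD J (Ls θ) := by
  classical
  obtain ⟨b, hbL, x, hinj, hty, hfa⟩ := minimal_exactB hmin
  by_cases hs₀ : ∃ i, s₀ = x i
  · obtain ⟨i₀, hi₀⟩ := hs₀
    set bv := variant1 b i₀.val with hbv
    have hlen : bv.ex.length = b.ex.length := variant1_ex_length b i₀.val
    refine ⟨bv, List.mem_flatMap.mpr ⟨b, hbL, List.mem_append_left _
      (List.mem_map.mpr ⟨i₀.val, List.mem_range.mpr i₀.2, rfl⟩)⟩,
      fun j => x (Fin.cast hlen j), hinj.comp (Fin.cast_injective hlen), ?_, ?_⟩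
    · rintro ⟨jn, hjn⟩
      simp only [List.get_eq_getElem]
      by_cases hji : jn = (i₀ : ℕ)
      · subst hji
        have hcast : Fin.cast hlen ⟨(i₀ : ℕ), hjn⟩ = i₀ := Fin.ext rfl
        rw [hcast, ← hi₀, variant1_getElem_self b i₀.2, hJ0]
        have hIs : I s₀ = b.ex[(i₀ : ℕ)]'i₀.2 := by
          rw [hi₀]
          simpa [List.get_eq_getElem] using hty i₀
        rw [hIs]
      · have hjlt : jn < b.ex.length := lt_of_lt_of_eq hjn hlen
        have hxne : x (Fin.cast hlen ⟨jn, hjn⟩) ≠ s₀ := by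
          rw [hi₀]
          intro hc
          exact hji (congrArg Fin.val (hinj hc))
        rw [variant1_getElem_ne b hjlt (fun hc => hji hc.symm), hJ _ hxne]
        have hIs : I (x (Fin.cast hlen ⟨jn, hjn⟩)) = b.ex[jn]'hjlt := by
          simpa [List.get_eq_getElem] using hty (Fin.cast hlen ⟨jn, hjn⟩)
        rw [hIs]
        exact subset_rfl
    · intro y hy
      have hyx : ∀ i, y ≠ x i := fun i hc => hy (Fin.cast hlen.symm i) hc
      have hys₀ : y ≠ s₀ := fun hc => hyx i₀ (hc.trans hi₀)
      refine ⟨emb (I y), List.mem_map.mpr ⟨I y, hfa y hyx, rfl⟩, ?_⟩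
      rw [hJ y hys₀]
      exact subset_rfl
  · push_neg at hs₀
    have hBfa : I s₀ ∈ b.fa := hfa s₀ (fun i => hs₀ i)
    set bv := variant2 b (I s₀) with hbv
    have hlen : bv.ex.length = b.ex.length + 1 := variant2_ex_length b (I s₀)
    set x' : Fin bv.ex.length → S := fun j =>
      if h : (j : ℕ) < b.ex.length then x ⟨j, h⟩ else s₀ with hx'
    refine ⟨bv, List.mem_flatMap.mpr ⟨b, hbL, List.mem_append_right _
      (List.mem_map.mpr ⟨I s₀, hBfa, rfl⟩)⟩, x', ?_, ?_, ?_⟩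
    · rintro ⟨jn, hj⟩ ⟨kn, hk⟩ hjk
      rw [hx'] at hjk
      simp only at hjk
      by_cases hjl : jn < b.ex.length <;> by_cases hkl : kn < b.ex.length
      · rw [dif_pos hjl, dif_pos hkl] at hjk
        exact Fin.ext (congrArg Fin.val (hinj hjk) : jn = kn)
      · rw [dif_pos hjl, dif_neg hkl] at hjk
        exact absurd hjk.symm (hs₀ _)
      · rw [dif_neg hjl, dif_pos hkl] at hjk
        exact absurd hjk (hs₀ _)
      · have hj' := lt_of_lt_of_eq hj hlen
        have hk' := lt_of_lt_of_eq hk hlen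
        exact Fin.ext (by omega : jn = kn)
    · rintro ⟨jn, hjn⟩
      simp only [List.get_eq_getElem]
      by_cases hjl : jn < b.ex.length
      · rw [variant2_getElem_lt b _ hjl, hx']
        simp only [dif_pos hjl]
        have hne : x ⟨jn, hjl⟩ ≠ s₀ := (hs₀ _).symm
        rw [hJ _ hne]
        have hIs : I (x ⟨jn, hjl⟩) = b.ex[jn]'hjl := by
          simpa [List.get_eq_getElem] using hty ⟨jn, hjl⟩
        rw [hIs]
        exact subset_rfl
      · have hj' := lt_of_lt_of_eq hjn hlen
        have hjeq : jn = b.ex.length := by omega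
        subst hjeq
        rw [variant2_getElem_last b (I s₀), hx']
        simp only [dif_neg hjl]
        rw [hJ0]
    · intro y hy
      have hys₀ : y ≠ s₀ := by
        intro hc
        refine hy ⟨b.ex.length, by omega⟩ ?_
        rw [hx']
        simp [hc]
      have hyx : ∀ i, y ≠ x i := by
        rintro ⟨inn, hin⟩ hc
        refine hy ⟨inn, by omega⟩ ?_
        rw [hx']
        simp only [dif_pos hin]
        exact hc
      refine ⟨emb (I y), List.mem_map.mpr ⟨I y, hfa y hyx, rfl⟩, ?_⟩
      rw [hJ y hys₀]
      exact subset_rfl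

end Stmt17Aux
namespace Stmt17Aux

variable {Q : Type} [Finite Q]

lemma part3 {S : Type} [Nonempty S] (θ : OneStep Q) (J : S → Set (Q ⊕ Set Q))
    (hmin : MinimalModel (fun J' => SatD J' (Ls θ)) J) :
    (∃! s₀ : S, ∃ Q'' : Set Q, J s₀ = {Sum.inr Q''}) ∧
    (∀ (s₀ : S) (Q'' : Set Q), J s₀ = {Sum.inr Q''} →
      ∀ I : S → Set Q,
        (I s₀ = Q'' ∧ ∀ s, s ≠ s₀ → I s = Sum.inl ⁻¹' J s) →
        SatC I θ) := by
  classical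
  obtain ⟨bv, hbvL, hex⟩ := minimal_exact hmin
  obtain ⟨b, hbL, hbv⟩ := List.mem_flatMap.mp hbvL
  have hgood : Good θ b := good_of_mem_L0 hbL
  obtain ⟨x, hinj, hty, hfa⟩ := hex
  rcases List.mem_append.mp hbv with h1 | h2
  · -- variant1 case
    obtain ⟨i, hi, hbveq⟩ := List.mem_map.mp h1
    have hilt : i < b.ex.length := List.mem_range.mp hi
    subst hbveq
    have hlen : (variant1 b i).ex.length = b.ex.length := variant1_ex_length b i
    have hilt' : i < (variant1 b i).ex.length := by omega
    set m := x ⟨i, hilt'⟩ with hm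
    set τ₀ := b.ex[i]'hilt with hτ₀
    have hJm : J m = {Sum.inr τ₀} := by
      have := hty ⟨i, hilt'⟩
      rwa [List.get_eq_getElem, variant1_getElem_self b hilt] at this
    have hwitJ : ∀ (jn : ℕ) (hjn : jn < (variant1 b i).ex.length), jn ≠ i →
        J (x ⟨jn, hjn⟩) = emb (b.ex[jn]'(by omega)) := by
      intro jn hjn hne
      have := hty ⟨jn, hjn⟩
      rwa [List.get_eq_getElem, variant1_getElem_ne b (by omega) (fun hc => hne hc.symm)]
        at this
    have hclaim : ∀ (s : S) (Q'' : Set Q), J s = {Sum.inr Q''} → s = m := by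
      intro s Q'' hs
      have hmem : Sum.inr Q'' ∈ J s := by rw [hs]; exact rfl
      by_cases hw : ∃ j, s = x j
      · obtain ⟨⟨jn, hjn⟩, rfl⟩ := hw
        by_cases hji : jn = i
        · subst hji; rfl
        · rw [hwitJ jn hjn hji] at hmem
          exact absurd hmem (inr_not_mem_emb _ _)
      · push_neg at hw
        have := hfa s (fun j hc => hw j hc)
        obtain ⟨B, -, hB⟩ := List.mem_map.mp this
        rw [← hB] at hmem
        exact absurd hmem (inr_not_mem_emb _ _)
    constructor
    · exact ⟨m, ⟨τ₀, hJm⟩, fun s hs => hclaim s hs.choose hs.choose_spec⟩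
    · intro s₀ Q'' hJs0 I ⟨hI0, hIrest⟩
      have hs0m : s₀ = m := hclaim s₀ Q'' hJs0
      subst hs0m
      have hQτ : Q'' = τ₀ := by
        rw [hJm] at hJs0
        exact (Sum.inr.inj (Set.singleton_eq_singleton_iff.mp hJs0)).symm
      refine hgood S ‹_› I ⟨fun k => x (Fin.cast hlen.symm k), hinj.comp
        (Fin.cast_injective _), ?_, ?_⟩
      · rintro ⟨kn, hkn⟩
        simp only [List.get_eq_getElem]
        by_cases hki : kn = i
        · subst hki
          have : x (Fin.cast hlen.symm ⟨kn, hkn⟩) = m := rfl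
          rw [this, hI0, hQτ]
        · have hne : x (Fin.cast hlen.symm ⟨kn, hkn⟩) ≠ m := by
            intro hc
            exact hki (congrArg Fin.val (hinj hc))
          rw [hIrest _ hne]
          rw [show J (x (Fin.cast hlen.symm ⟨kn, hkn⟩)) =
            emb (b.ex[kn]'hkn) from hwitJ kn (by omega) hki, preimage_emb]
      · intro y hy
        have hyx : ∀ j, y ≠ x j := fun j hc => hy (Fin.cast hlen j) hc
        have hym : y ≠ m := hyx _
        obtain ⟨B, hBfa, hB⟩ := List.mem_map.mp (hfa y hyx)
        rw [hIrest _ hym, ← hB, preimage_emb]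
        exact hBfa
  · -- variant2 case
    obtain ⟨B, hBfa, hbveq⟩ := List.mem_map.mp h2
    subst hbveq
    have hlen : (variant2 b B).ex.length = b.ex.length + 1 := variant2_ex_length b B
    have hllt : b.ex.length < (variant2 b B).ex.length := by omega
    set m := x ⟨b.ex.length, hllt⟩ with hm
    have hJm : J m = {Sum.inr B} := by
      have := hty ⟨b.ex.length, hllt⟩
      rwa [List.get_eq_getElem, variant2_getElem_last b B] at this
    have hwitJ : ∀ (jn : ℕ) (hjn : jn < b.ex.length),
        J (x ⟨jn, by omega⟩) = emb (b.ex[jn]'hjn) := by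
      intro jn hjn
      have := hty ⟨jn, by omega⟩
      rwa [List.get_eq_getElem, variant2_getElem_lt b B hjn] at this
    have hclaim : ∀ (s : S) (Q'' : Set Q), J s = {Sum.inr Q''} → s = m := by
      intro s Q'' hs
      have hmem : Sum.inr Q'' ∈ J s := by rw [hs]; exact rfl
      by_cases hw : ∃ j, s = x j
      · obtain ⟨⟨jn, hjn⟩, rfl⟩ := hw
        by_cases hji : jn = b.ex.length
        · subst hji; rfl
        · have hjn' : jn < b.ex.length := by omega
          rw [hwitJ jn hjn'] at hmem
          exact absurd hmem (inr_not_mem_emb _ _)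
      · push_neg at hw
        have := hfa s (fun j hc => hw j hc)
        obtain ⟨B', -, hB'⟩ := List.mem_map.mp this
        rw [← hB'] at hmem
        exact absurd hmem (inr_not_mem_emb _ _)
    constructor
    · exact ⟨m, ⟨B, hJm⟩, fun s hs => hclaim s hs.choose hs.choose_spec⟩
    · intro s₀ Q'' hJs0 I ⟨hI0, hIrest⟩
      have hs0m : s₀ = m := hclaim s₀ Q'' hJs0
      subst hs0m
      have hQτ : Q'' = B := by
        rw [hJm] at hJs0
        exact (Sum.inr.inj (Set.singleton_eq_singleton_iff.mp hJs0)).symm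
      refine hgood S ‹_› I ⟨fun k => x ⟨k.val, by omega⟩, ?_, ?_, ?_⟩
      · rintro ⟨jn, hj⟩ ⟨kn, hk⟩ hjk
        exact Fin.ext (congrArg Fin.val (hinj hjk) : jn = kn)
      · rintro ⟨kn, hkn⟩
        simp only [List.get_eq_getElem]
        have hne : x ⟨kn, by omega⟩ ≠ m := by
          intro hc
          have hkb : kn = b.ex.length := congrArg Fin.val (hinj hc)
          omega
        rw [hIrest _ hne, hwitJ kn hkn, preimage_emb]
      · intro y hy
        by_cases hym : y = m
        · subst hym
          rw [hI0, hQτ]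
          exact hBfa
        · have hyx : ∀ j, y ≠ x j := by
            rintro ⟨jn, hjn⟩ hc
            by_cases hji : jn = b.ex.length
            · subst hji
              exact hym hc
            · exact hy ⟨jn, by omega⟩ hc
          obtain ⟨B', hB'fa, hB'⟩ := List.mem_map.mp (hfa y hyx)
          rw [hIrest _ hym, ← hB', preimage_emb]
          exact hB'fa

end Stmt17Aux
end

/-- For every positive first-order `Q`-constraint `θ` there is a constraint
`θ_s` over `Q ∪ 2^Q` (a disjunction of basic formulas) that is `2^Q`-functional
in one direction and simulates `θ`: (1) for every minimal model `(S, I)` of `θ`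
and every `s₀ ∈ S`, replacing `I(s₀)` by the singleton `{I(s₀)} ⊆ 2^Q` (and
embedding the rest into `Q ∪ 2^Q`) yields a model of `θ_s`; (2) for every
minimal model `(S, J)` of `θ_s` there is a unique `s₀` with `J(s₀) = {Q''}`
for some `Q'' ∈ 2^Q`, and replacing `J(s₀)` by `Q''` yields a model of `θ`. -/
theorem stmt17 {Q : Type} [Nonempty Q] [Finite Q]
    (Q' : Set Q) (hQ' : Q'.Nonempty) (θ : OneStep Q) :
    ∃ L : List (BasicFormula (Q ⊕ Set Q)),
      (∀ b ∈ L, FunctionalOneDir b) ∧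
      (∀ (S : Type) [Nonempty S], ∀ I : S → Set Q,
        MinimalModel (fun J => SatC J θ) I →
        ∀ s₀ : S, ∀ J : S → Set (Q ⊕ Set Q),
          (J s₀ = {Sum.inr (I s₀)} ∧ ∀ s, s ≠ s₀ → J s = Sum.inl '' I s) →
          SatD J L) ∧
      (∀ (S : Type) [Nonempty S], ∀ J : S → Set (Q ⊕ Set Q),
        MinimalModel (fun J' => SatD J' L) J →
        (∃! s₀ : S, ∃ Q'' : Set Q, J s₀ = {Sum.inr Q''}) ∧
        (∀ (s₀ : S) (Q'' : Set Q), J s₀ = {Sum.inr Q''} →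
          ∀ I : S → Set Q,
            (I s₀ = Q'' ∧ ∀ s, s ≠ s₀ → I s = Sum.inl ⁻¹' J s) →
            SatC I θ)) := by
  classical
  refine ⟨Stmt17Aux.Ls θ, ?_, ?_, ?_⟩
  · intro b hb
    obtain ⟨b₀, hb₀, hbv⟩ := List.mem_flatMap.mp hb
    exact Stmt17Aux.functional_variants hbv
  · intro S _ I hmin s₀ J hJ
    exact Stmt17Aux.part2 I hmin s₀ J hJ.1 hJ.2
  · intro S _ J hmin
    exact Stmt17Aux.part3 θ J hmin
end
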